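/- Let M = Inv⟨X | r_i(u_1,…,u_k) = 1 (i ∈ I)⟩ be a special inverse monoid where each relator is a concatenation of the words u_j and their formal inverses, and suppose each u_j represents a unit of M (a unital factorisation). Then every prefix of every u_j^{±1} that occurs in some relator represents a right unit of M, and hence the factorisation is conservative in the maximal group image G: the submonoid of G generated by prefixes of the factors equals the prefix monoid of G. -/

import Mathlib

/-- An inverse monoid: a monoid with an involution `⁻¹` such that `x * x⁻¹ * x = x`,
`x⁻¹ * x * x⁻¹ = x⁻¹` and all idempotents commute (these conditions are equivalent to
uniqueness of generalized inverses). -/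
class InverseMonoid (M : Type*) extends Monoid M, Inv M where
  mul_inv_mul : ∀ x : M, x * x⁻¹ * x = x
  inv_mul_inv : ∀ x : M, x⁻¹ * x * x⁻¹ = x⁻¹
  idem_comm : ∀ e f : M, e * e = e → f * f = f → e * f = f * e

namespace InverseMonoid

variable {M : Type*} [InverseMonoid M]

/-- An idempotent element. -/
def IsIdem (e : M) : Prop := e * e = e

/-- The natural partial order on an inverse monoid: `x ≤ y` iff `x = y * e` for some
idempotent `e`. -/
def le (x y : M) : Prop := ∃ e : M, IsIdem e ∧ x = y * e

/-- The compatibility relation: `m ∼ n` iff `m * n⁻¹` and `m⁻¹ * n` are idempotent. -/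
def Compatible (m n : M) : Prop := IsIdem (m * n⁻¹) ∧ IsIdem (m⁻¹ * n)

/-- `z` is the meet (greatest lower bound) of `m` and `n` in the natural partial order. -/
def IsMeet (m n z : M) : Prop :=
  le z m ∧ le z n ∧ ∀ w : M, le w m → le w n → le w z

/-- An inverse monoid is E-unitary iff its compatibility relation is transitive. -/
def EUnitary (M : Type*) [InverseMonoid M] : Prop :=
  ∀ a b c : M, Compatible a b → Compatible b c → Compatible a c

end InverseMonoid

open InverseMonoid

/-- Evaluation of a word over `X ∪ X⁻¹` in a monoid with involution. -/
def wordProd {X M : Type*} [Monoid M] [Inv M] (f : X → M) (w : List (X × Bool)) : M :=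
  (w.map fun p => if p.2 then f p.1 else (f p.1)⁻¹).prod

/-- The formal inverse of a word over `X ∪ X⁻¹`. -/
def winv {X : Type*} (w : List (X × Bool)) : List (X × Bool) :=
  (w.map fun p => (p.1, !p.2)).reverse

/-- The set of relators in the free group determined by a family of relator words. -/
def presRels {X I : Type*} (rel : I → List (X × Bool)) : Set (FreeGroup X) :=
  Set.range fun i => FreeGroup.mk (rel i)

/-- The canonical projection from the free group onto a presented group. -/
def toPres {X : Type*} (R : Set (FreeGroup X)) : FreeGroup X →* PresentedGroup R :=
  QuotientGroup.mk' (Subgroup.normalClosure R)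

/-- The prefix monoid of a group presentation: the submonoid of the presented group
generated by the images of all prefixes of the relator words. -/
def prefixMonoid {X I : Type*} (rel : I → List (X × Bool)) :
    Submonoid (PresentedGroup (presRels rel)) :=
  Submonoid.closure
    {g | ∃ (i : I) (p : List (X × Bool)), p <+: rel i ∧ g = toPres (presRels rel) (FreeGroup.mk p)}

/-- `f : X → M` is a presentation of the inverse monoid `M` by the special presentation
`Inv⟨X | rel i = 1 (i ∈ I)⟩`: the relators hold, the generators generate, and `M` is
universal among inverse monoids satisfying the relations. -/
structure IsSpecialPresentation {X I : Type*} (rel : I → List (X × Bool))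
    {M : Type*} [InverseMonoid M] (f : X → M) : Prop where
  relator_one : ∀ i, wordProd f (rel i) = 1
  generates : ∀ m : M, ∃ w : List (X × Bool), wordProd f w = m
  universal : ∀ (N : Type) (_ : InverseMonoid N) (g : X → N),
    (∀ i, wordProd g (rel i) = 1) → ∃ φ : M →* N, ∀ x, φ (f x) = g x

/-- The signed factor word `u_j^ε`. -/
def sfac {X : Type*} {k : ℕ} (u : Fin k → List (X × Bool)) (q : Fin k × Bool) :
    List (X × Bool) :=
  if q.2 then u q.1 else winv (u q.1)
section IMTheory

variable {M : Type*} [InverseMonoid M]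

theorem im_gi_unique {x y z : M} (h1 : x * y * x = x) (h2 : y * x * y = y)
    (h3 : x * z * x = x) (h4 : z * x * z = z) : y = z := by
  have iyx : (y*x)*(y*x) = y*x := by rw [← mul_assoc, h2]
  have izx : (z*x)*(z*x) = z*x := by rw [← mul_assoc, h4]
  have ixy : (x*y)*(x*y) = x*y := by rw [← mul_assoc, h1]
  have ixz : (x*z)*(x*z) = x*z := by rw [← mul_assoc, h3]
  have B : y*x*z = y := by
    calc y*x*z = (y*x*y)*x*z := by rw [h2]
      _ = y*((x*y)*(x*z)) := by simp [mul_assoc]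
      _ = y*((x*z)*(x*y)) := by rw [InverseMonoid.idem_comm _ _ ixy ixz]
      _ = y*(x*z*x)*y := by simp [mul_assoc]
      _ = y*x*y := by rw [h3]
      _ = y := h2
  have C : z = y := by
    calc z = z*x*z := h4.symm
      _ = z*(x*y*x)*z := by rw [h1]
      _ = (z*x)*(y*x)*z := by simp [mul_assoc]
      _ = (y*x)*(z*x)*z := by rw [InverseMonoid.idem_comm _ _ izx iyx]
      _ = y*x*(z*x*z) := by simp [mul_assoc]
      _ = y*x*z := by rw [h4]
      _ = y := B
  exact C.symm

theorem im_inv_eq {x y : M} (h1 : x * y * x = x) (h2 : y * x * y = y) : x⁻¹ = y :=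
  im_gi_unique (InverseMonoid.mul_inv_mul x) (InverseMonoid.inv_mul_inv x) h1 h2

theorem im_inv_inv (x : M) : x⁻¹⁻¹ = x :=
  im_inv_eq (InverseMonoid.inv_mul_inv x) (InverseMonoid.mul_inv_mul x)

theorem im_one_inv : (1 : M)⁻¹ = 1 := im_inv_eq (by simp) (by simp)

theorem im_mul_inv_rev (a b : M) : (a * b)⁻¹ = b⁻¹ * a⁻¹ := by
  have e1 : (b*b⁻¹)*(b*b⁻¹) = b*b⁻¹ := by rw [← mul_assoc, InverseMonoid.mul_inv_mul]
  have e2 : (a⁻¹*a)*(a⁻¹*a) = a⁻¹*a := by rw [← mul_assoc, InverseMonoid.inv_mul_inv]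
  refine im_inv_eq ?_ ?_
  · calc (a*b)*(b⁻¹*a⁻¹)*(a*b) = a*((b*b⁻¹)*(a⁻¹*a))*b := by simp [mul_assoc]
      _ = a*((a⁻¹*a)*(b*b⁻¹))*b := by rw [InverseMonoid.idem_comm _ _ e1 e2]
      _ = (a*a⁻¹*a)*(b*b⁻¹*b) := by simp [mul_assoc]
      _ = a*b := by rw [InverseMonoid.mul_inv_mul, InverseMonoid.mul_inv_mul]
  · calc (b⁻¹*a⁻¹)*(a*b)*(b⁻¹*a⁻¹) = b⁻¹*((a⁻¹*a)*(b*b⁻¹))*a⁻¹ := by simp [mul_assoc]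
      _ = b⁻¹*((b*b⁻¹)*(a⁻¹*a))*a⁻¹ := by rw [InverseMonoid.idem_comm _ _ e2 e1]
      _ = (b⁻¹*b*b⁻¹)*(a⁻¹*a*a⁻¹) := by simp [mul_assoc]
      _ = b⁻¹*a⁻¹ := by rw [InverseMonoid.inv_mul_inv, InverseMonoid.inv_mul_inv]

theorem im_right_unit {x v : M} (h : x * v = 1) : x * x⁻¹ = 1 := by
  calc x*x⁻¹ = x*x⁻¹*(x*v) := by rw [h, mul_one]
    _ = (x*x⁻¹*x)*v := by simp [mul_assoc]
    _ = x*v := by rw [InverseMonoid.mul_inv_mul]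
    _ = 1 := h

theorem im_map_inv {N : Type*} [InverseMonoid N] (φ : M →* N) (x : M) :
    φ x⁻¹ = (φ x)⁻¹ := by
  refine (im_inv_eq ?_ ?_).symm
  · rw [← map_mul, ← map_mul, InverseMonoid.mul_inv_mul x]
  · rw [← map_mul, ← map_mul, InverseMonoid.inv_mul_inv x]

theorem wordProd_nil {X : Type*} (f : X → M) : wordProd f ([] : List (X × Bool)) = 1 := rfl

theorem wordProd_cons {X : Type*} (f : X → M) (l : X × Bool) (w : List (X × Bool)) :
    wordProd f (l :: w) = (if l.2 then f l.1 else (f l.1)⁻¹) * wordProd f w := by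
  simp [wordProd]

theorem wordProd_append {X : Type*} (f : X → M) (a b : List (X × Bool)) :
    wordProd f (a ++ b) = wordProd f a * wordProd f b := by
  simp [wordProd]

theorem wordProd_winv {X : Type*} (f : X → M) (w : List (X × Bool)) :
    wordProd f (winv w) = (wordProd f w)⁻¹ := by
  induction w with
  | nil => simpa [winv, wordProd] using im_one_inv.symm
  | cons l w ih =>
    have hw : winv (l :: w) = winv w ++ [(l.1, !l.2)] := by simp [winv]
    rw [hw, wordProd_append, ih, wordProd_cons (w := w), im_mul_inv_rev]
    congr 1
    cases l with
    | mk x b => cases b <;> simp [wordProd, im_inv_inv]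

theorem im_hom_wordProd {X : Type*} {N : Type*} [InverseMonoid N] (φ : M →* N)
    (f : X → M) (g : X → N) (hfg : ∀ x, φ (f x) = g x) (w : List (X × Bool)) :
    φ (wordProd f w) = wordProd g w := by
  induction w with
  | nil => simp [wordProd_nil]
  | cons l w ih =>
    rw [wordProd_cons, wordProd_cons, map_mul, ih]
    congr 1
    cases hb : l.2 <;> simp [hfg, im_map_inv]

end IMTheory

section PEquivIM

variable {α : Type*}

theorem pe_trans_apply (f g : PEquiv α α) (a : α) : (f.trans g) a = (f a).bind g := rfl

theorem pe_mim (f : PEquiv α α) : (f.trans f.symm).trans f = f := by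
  ext a b
  rw [pe_trans_apply, pe_trans_apply]
  cases h : f a with
  | none => simp [h]
  | some c =>
    have hs : f.symm c = some a := f.eq_some_iff.mpr h
    simp [h, hs]

theorem pe_idem_fix {e : PEquiv α α} (he : e.trans e = e) :
    ∀ a b, e a = some b → b = a := by
  intro a b h
  have h2 : e b = some b := by
    have : (e.trans e) a = e a := by rw [he]
    rw [pe_trans_apply, h] at this
    simpa [h] using this
  have m1 : a ∈ e.symm b := e.mem_iff_mem.mpr (by simp [h, Option.mem_def])
  have m2 : b ∈ e.symm b := e.mem_iff_mem.mpr (by simp [h2, Option.mem_def])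
  rw [Option.mem_def] at m1 m2
  exact (Option.some.inj (m1.symm.trans m2)).symm

instance instPEIM : InverseMonoid (PEquiv α α) where
  mul f g := f.trans g
  one := PEquiv.refl α
  mul_assoc := PEquiv.trans_assoc
  one_mul := PEquiv.refl_trans
  mul_one := PEquiv.trans_refl
  inv := PEquiv.symm
  mul_inv_mul := pe_mim
  inv_mul_inv := fun f => by
    have := pe_mim f.symm
    rwa [PEquiv.symm_symm] at this
  idem_comm := by
    intro e f he hf
    have he' := pe_idem_fix he
    have hf' := pe_idem_fix hf
    show e.trans f = f.trans e
    ext a b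
    rw [pe_trans_apply, pe_trans_apply]
    rcases h1 : e a with _ | c
    · rcases h2 : f a with _ | d
      · simp [h1, h2]
      · obtain rfl := hf' a d h2
        simp [h1, h2]
    · obtain rfl := he' a c h1
      rcases h2 : f c with _ | d
      · simp [h1, h2]
      · obtain rfl := hf' c d h2
        simp [h1, h2]

theorem pe_mul_def (f g : PEquiv α α) : f * g = f.trans g := rfl
theorem pe_one_def : (1 : PEquiv α α) = PEquiv.refl α := rfl
theorem pe_inv_def (f : PEquiv α α) : f⁻¹ = f.symm := rfl

end PEquivIM


section ListHelpers

theorem prefix_append_cases {α : Type*} :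
    ∀ {A B p : List α}, p <+: A ++ B → p <+: A ∨ ∃ p', p = A ++ p' ∧ p' <+: B := by
  intro A
  induction A with
  | nil => intro B p h; right; exact ⟨p, by simp, by simpa using h⟩
  | cons a A ih =>
    intro B p h
    cases p with
    | nil => left; exact List.nil_prefix
    | cons x p' =>
      rw [List.cons_append, List.cons_prefix_cons] at h
      obtain ⟨rfl, h'⟩ := h
      rcases ih h' with h'' | ⟨q, rfl, hq⟩
      · left; exact List.cons_prefix_cons.mpr ⟨rfl, h''⟩
      · right; exact ⟨q, by simp, hq⟩

theorem mk_winv {β : Type*} (L : List (β × Bool)) :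
    FreeGroup.mk (winv L) = (FreeGroup.mk L)⁻¹ := by
  rw [FreeGroup.inv_mk]; rfl

theorem winv_winv {β : Type*} (w : List (β × Bool)) : winv (winv w) = w := by
  show FreeGroup.invRev (FreeGroup.invRev w) = w
  exact FreeGroup.invRev_invRev

end ListHelpers

section Model

open scoped Classical

variable {X I : Type*} {k : ℕ} (rel : I → List (X × Bool)) (u : Fin k → List (X × Bool))

/-- Codes for the letters occurring in the factor words `u j`. -/
def Cde : Type := Σ j : Fin k, Fin ((u j).length)

/-- Decode a signed code into a signed letter. -/
def decL (cb : Cde u × Bool) : X × Bool :=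
  (((u cb.1.1).get cb.1.2).1,
    if cb.2 then ((u cb.1.1).get cb.1.2).2 else !((u cb.1.1).get cb.1.2).2)

/-- Decode a word of signed codes. -/
def decW (w : List (Cde u × Bool)) : List (X × Bool) := w.map (decL u)

/-- Evaluate a code word in the presented group. -/
def evalw (w : List (Cde u × Bool)) : PresentedGroup (presRels rel) :=
  toPres (presRels rel) (FreeGroup.mk (decW u w))

theorem decW_winv (w : List (Cde u × Bool)) : decW u (winv w) = winv (decW u w) := by
  unfold decW winv
  simp only [List.map_reverse, List.map_map]
  congr 1
  apply List.map_congr_left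
  rintro ⟨c, b⟩ _
  cases b <;> simp [decL, Function.comp]

theorem evalw_nil : evalw rel u [] = 1 := by
  unfold evalw decW
  rw [List.map_nil, ← FreeGroup.one_eq_mk, map_one]

theorem evalw_append (v w : List (Cde u × Bool)) :
    evalw rel u (v ++ w) = evalw rel u v * evalw rel u w := by
  unfold evalw decW
  rw [List.map_append, ← FreeGroup.mul_mk, map_mul]

theorem evalw_winv (w : List (Cde u × Bool)) :
    evalw rel u (winv w) = (evalw rel u w)⁻¹ := by
  unfold evalw
  rw [decW_winv, mk_winv, map_inv]

/-- The carrier of the Type-0 model: code words evaluating into the prefix monoid,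
up to equal evaluation. -/
@[reducible] def SS : Type :=
  Quot (fun (v w : {w : List (Cde u × Bool) // evalw rel u w ∈ prefixMonoid rel}) =>
    evalw rel u v.1 = evalw rel u w.1)

def valS : SS rel u → PresentedGroup (presRels rel) :=
  Quot.lift (fun v => evalw rel u v.1) (fun _ _ h => h)

theorem valS_mem (s : SS rel u) : valS rel u s ∈ prefixMonoid rel := by
  induction s using Quot.ind with
  | _ v => exact v.2

theorem valS_inj {s t : SS rel u} (h : valS rel u s = valS rel u t) : s = t := by
  induction s using Quot.ind with
  | _ v =>
    induction t using Quot.ind with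
    | _ w => exact Quot.sound h

/-- The partial right-multiplication map attached to a code word. -/
noncomputable def Fm (w : List (Cde u × Bool)) : SS rel u → Option (SS rel u) :=
  Quot.lift
    (fun v => if h : evalw rel u (v.1 ++ w) ∈ prefixMonoid rel then
        some (Quot.mk _ ⟨v.1 ++ w, h⟩) else none)
    (by
      intro a b hab
      have key : evalw rel u (a.1 ++ w) = evalw rel u (b.1 ++ w) := by
        rw [evalw_append, evalw_append, hab]
      by_cases h1 : evalw rel u (a.1 ++ w) ∈ prefixMonoid rel
      · have h2 : evalw rel u (b.1 ++ w) ∈ prefixMonoid rel := key ▸ h1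
        rw [dif_pos h1, dif_pos h2]
        exact congrArg some (Quot.sound key)
      · have h2 : ¬ evalw rel u (b.1 ++ w) ∈ prefixMonoid rel := by
          rw [← key]; exact h1
        rw [dif_neg h1, dif_neg h2])

theorem Fm_mem {w : List (Cde u × Bool)} {a b : SS rel u} :
    b ∈ Fm rel u w a ↔ valS rel u b = valS rel u a * evalw rel u w := by
  induction a using Quot.ind with
  | _ v =>
    induction b using Quot.ind with
    | _ t =>
      have redu : Fm rel u w (Quot.mk _ v) =
          if h : evalw rel u (v.1 ++ w) ∈ prefixMonoid rel then
            some (Quot.mk _ ⟨v.1 ++ w, h⟩) else none := rfl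
      rw [redu]
      split_ifs with h
      · simp only [Option.mem_def, Option.some.injEq]
        constructor
        · intro heq
          have hq : valS rel u (Quot.mk _ t) = valS rel u (Quot.mk _ ⟨v.1 ++ w, h⟩) :=
            congrArg (valS rel u) heq.symm
          rw [hq]
          exact evalw_append rel u v.1 w
        · intro hv
          exact Quot.sound (show evalw rel u (v.1 ++ w) = evalw rel u t.1 by
            rw [evalw_append]; exact hv.symm)
      · simp only [Option.not_mem_none, false_iff]
        intro hv
        apply h
        rw [evalw_append]
        have hv' : valS rel u (Quot.mk _ t) = evalw rel u v.1 * evalw rel u w := hv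
        rw [← hv']
        exact valS_mem rel u (Quot.mk _ t)

theorem Fm_defined {w : List (Cde u × Bool)} {a : SS rel u}
    (h : valS rel u a * evalw rel u w ∈ prefixMonoid rel) :
    ∃ b, b ∈ Fm rel u w a := by
  induction a using Quot.ind with
  | _ v =>
    have h' : evalw rel u (v.1 ++ w) ∈ prefixMonoid rel := by
      rw [evalw_append]; exact h
    exact ⟨Quot.mk _ ⟨v.1 ++ w, h'⟩, by
      show Fm rel u w (Quot.mk _ v) = some _
      exact dif_pos h'⟩

/-- The partial bijection attached to a code word. -/
noncomputable def peq (w : List (Cde u × Bool)) : PEquiv (SS rel u) (SS rel u) where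
  toFun := Fm rel u w
  invFun := Fm rel u (winv w)
  inv a b := by
    rw [← Option.mem_def, ← Option.mem_def, Fm_mem, Fm_mem, evalw_winv, eq_mul_inv_iff_mul_eq]
    exact eq_comm

theorem peq_symm (w : List (Cde u × Bool)) :
    (peq rel u w).symm = peq rel u (winv w) := by
  apply PEquiv.ext
  intro a
  show Fm rel u (winv w) a = Fm rel u (winv w) a
  rfl

theorem peq_apply (w : List (Cde u × Bool)) (a : SS rel u) :
    (peq rel u w) a = Fm rel u w a := rfl

/-- The generators of the model. -/
noncomputable def gtl (x : X) : PEquiv (SS rel u) (SS rel u) :=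
  if h : ∃ cb : Cde u × Bool, decL u cb = (x, true) then
    peq rel u [Classical.choose h] else 1

theorem gt_letter (l : X × Bool) (h : ∃ cb : Cde u × Bool, decL u cb = (l.1, true)) :
    ∃ w₀ : List (Cde u × Bool),
      (if l.2 then gtl rel u l.1 else (gtl rel u l.1)⁻¹) = peq rel u w₀ ∧
      evalw rel u w₀ = toPres (presRels rel) (FreeGroup.mk [l]) := by
  obtain ⟨x, b⟩ := l
  simp only at h ⊢
  have hd : gtl rel u x = peq rel u [Classical.choose h] := dif_pos h
  have hspec := Classical.choose_spec h
  have he : evalw rel u [Classical.choose h] =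
      toPres (presRels rel) (FreeGroup.mk [(x, true)]) := by
    unfold evalw decW
    rw [List.map_cons, List.map_nil, hspec]
  cases b with
  | true => exact ⟨[Classical.choose h], by simpa using hd, he⟩
  | false =>
    refine ⟨winv [Classical.choose h], ?_, ?_⟩
    · rw [if_neg (by simp : ¬ ((false : Bool) = true)), hd, pe_inv_def, peq_symm]
    · rw [evalw_winv, he, ← map_inv, FreeGroup.inv_mk]
      rfl

theorem eval_readout :
    ∀ (w : List (X × Bool)),
      (∀ l ∈ w, ∃ cb : Cde u × Bool, decL u cb = (l.1, true)) →
      ∀ a b : SS rel u, b ∈ (wordProd (gtl rel u) w) a →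
      valS rel u b = valS rel u a * toPres (presRels rel) (FreeGroup.mk w) := by
  intro w
  induction w with
  | nil =>
    intro _ a b h
    rw [wordProd_nil, pe_one_def] at h
    rw [PEquiv.refl_apply, Option.mem_def, Option.some.injEq] at h
    subst h
    rw [← FreeGroup.one_eq_mk, map_one, mul_one]
  | cons l w ih =>
    intro hw a b h
    rw [wordProd_cons, pe_mul_def, PEquiv.mem_trans] at h
    obtain ⟨m, hm, hb⟩ := h
    obtain ⟨w₀, hterm, he⟩ := gt_letter rel u l (hw l (List.mem_cons_self))
    rw [hterm] at hm
    rw [peq_apply] at hm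
    have hm' : valS rel u m = valS rel u a * toPres (presRels rel) (FreeGroup.mk [l]) := by
      rw [← he]
      exact (Fm_mem rel u).mp hm
    have ihb := ih (fun l' hl' => hw l' (List.mem_cons_of_mem _ hl')) m b hb
    rw [ihb, hm', mul_assoc, ← map_mul, FreeGroup.mul_mk]
    rfl

theorem eval_defined :
    ∀ (w : List (X × Bool)),
      (∀ l ∈ w, ∃ cb : Cde u × Bool, decL u cb = (l.1, true)) →
      ∀ a : SS rel u,
      (∀ p, p <+: w → valS rel u a * toPres (presRels rel) (FreeGroup.mk p) ∈ prefixMonoid rel) →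
      ∃ b, b ∈ (wordProd (gtl rel u) w) a := by
  intro w
  induction w with
  | nil =>
    intro _ a _
    refine ⟨a, ?_⟩
    rw [wordProd_nil, pe_one_def, PEquiv.refl_apply]
    rfl
  | cons l w ih =>
    intro hw a hP
    obtain ⟨w₀, hterm, he⟩ := gt_letter rel u l (hw l (List.mem_cons_self))
    have h1 : valS rel u a * evalw rel u w₀ ∈ prefixMonoid rel := by
      rw [he]; exact hP [l] ⟨w, rfl⟩
    obtain ⟨m, hm⟩ := Fm_defined rel u h1
    have hvm : valS rel u m = valS rel u a * toPres (presRels rel) (FreeGroup.mk [l]) := by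
      rw [← he]; exact (Fm_mem rel u).mp hm
    obtain ⟨b, hb⟩ := ih (fun l' hl' => hw l' (List.mem_cons_of_mem _ hl')) m (by
      intro p hp
      rw [hvm, mul_assoc, ← map_mul, FreeGroup.mul_mk]
      refine hP (l :: p) ?_
      obtain ⟨t, ht⟩ := hp
      exact ⟨t, by rw [List.cons_append, ht]⟩)
    refine ⟨b, ?_⟩
    rw [wordProd_cons, pe_mul_def, PEquiv.mem_trans]
    refine ⟨m, ?_, hb⟩
    rw [hterm, peq_apply]
    exact hm

theorem code_of_mem_u {x : X} {s : Bool} {j : Fin k} (h : (x, s) ∈ u j) :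
    ∃ cb : Cde u × Bool, decL u cb = (x, true) := by
  obtain ⟨n, hn⟩ := List.mem_iff_get.mp h
  refine ⟨⟨⟨j, n⟩, s⟩, ?_⟩
  have hn' : (u j)[(n : ℕ)] = (x, s) := hn
  cases s <;> simp [decL, hn']

theorem code_of_mem_sfac (q : Fin k × Bool) {l : X × Bool} (hl : l ∈ sfac u q) :
    ∃ cb : Cde u × Bool, decL u cb = (l.1, true) := by
  obtain ⟨x, b⟩ := l
  unfold sfac at hl
  by_cases hb : q.2
  · rw [if_pos hb] at hl
    exact code_of_mem_u u hl
  · rw [if_neg hb] at hl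
    unfold winv at hl
    rw [List.mem_reverse, List.mem_map] at hl
    obtain ⟨⟨x', b'⟩, hmem, heq⟩ := hl
    have hx : x' = x := congrArg Prod.fst heq
    subst hx
    exact code_of_mem_u u hmem

theorem toPres_rel_one (i : I) : toPres (presRels rel) (FreeGroup.mk (rel i)) = 1 := by
  have h : FreeGroup.mk (rel i) ∈ Subgroup.normalClosure (presRels rel) :=
    Subgroup.subset_normalClosure ⟨i, rfl⟩
  exact (QuotientGroup.eq_one_iff _).mpr h

theorem gt_rel_one (seqs : I → List (Fin k × Bool))
    (hfac : ∀ i, rel i = ((seqs i).map (sfac u)).flatten) :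
    ∀ i, wordProd (gtl rel u) (rel i) = 1 := by
  intro i
  have hcode : ∀ l ∈ rel i, ∃ cb : Cde u × Bool, decL u cb = (l.1, true) := by
    intro l hl
    rw [hfac i, List.mem_flatten] at hl
    obtain ⟨L', hL', hlL⟩ := hl
    rw [List.mem_map] at hL'
    obtain ⟨q, hq, rfl⟩ := hL'
    exact code_of_mem_sfac u q hlL
  have key : ∀ a : SS rel u, (wordProd (gtl rel u) (rel i)) a = some a := by
    intro a
    have hP : ∀ p, p <+: rel i →
        valS rel u a * toPres (presRels rel) (FreeGroup.mk p) ∈ prefixMonoid rel :=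
      fun p hp => mul_mem (valS_mem rel u a) (Submonoid.subset_closure ⟨i, p, hp, rfl⟩)
    obtain ⟨b, hb⟩ := eval_defined rel u (rel i) hcode a hP
    have h := eval_readout rel u (rel i) hcode a b hb
    rw [toPres_rel_one rel i, mul_one] at h
    obtain rfl := valS_inj rel u h
    exact hb
  apply PEquiv.ext
  intro a
  rw [key a, pe_one_def, PEquiv.refl_apply]

end Model

section UnitFlatten

theorem unit_flatten {X : Type*} {M : Type*} [InverseMonoid M] (f : X → M) {k : ℕ}
    (u : Fin k → List (X × Bool))
    (hunital : ∀ j : Fin k,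
      wordProd f (u j) * (wordProd f (u j))⁻¹ = 1 ∧
      (wordProd f (u j))⁻¹ * wordProd f (u j) = 1)
    (L : List (Fin k × Bool)) :
    ∃ y, wordProd f ((L.map (sfac u)).flatten) * y = 1 ∧
      y * wordProd f ((L.map (sfac u)).flatten) = 1 := by
  induction L with
  | nil =>
    refine ⟨1, ?_, ?_⟩ <;> simp [wordProd_nil]
  | cons q L ih =>
    obtain ⟨y, hy1, hy2⟩ := ih
    have hq : ∃ z, wordProd f (sfac u q) * z = 1 ∧ z * wordProd f (sfac u q) = 1 := by
      unfold sfac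
      by_cases hb : q.2
      · rw [if_pos hb]
        exact ⟨_, (hunital q.1).1, (hunital q.1).2⟩
      · rw [if_neg hb, wordProd_winv]
        exact ⟨wordProd f (u q.1), (hunital q.1).2, (hunital q.1).1⟩
    obtain ⟨z, hz1, hz2⟩ := hq
    rw [List.map_cons, List.flatten_cons]
    refine ⟨y * z, ?_, ?_⟩
    · rw [wordProd_append]
      calc wordProd f (sfac u q) * wordProd f ((L.map (sfac u)).flatten) * (y * z)
          = wordProd f (sfac u q) * (wordProd f ((L.map (sfac u)).flatten) * y) * z := by
            simp [mul_assoc]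
        _ = wordProd f (sfac u q) * z := by rw [hy1, mul_one]
        _ = 1 := hz1
    · rw [wordProd_append]
      calc y * z * (wordProd f (sfac u q) * wordProd f ((L.map (sfac u)).flatten))
          = y * (z * wordProd f (sfac u q)) * wordProd f ((L.map (sfac u)).flatten) := by
            simp [mul_assoc]
        _ = y * wordProd f ((L.map (sfac u)).flatten) := by rw [hz2, mul_one]
        _ = 1 := hy2

end UnitFlatten


/-- Let `M = Inv⟨X | r_i(u_1,…,u_k) = 1⟩` be a special inverse monoid whose
relators factorise over words `u_1, …, u_k` each representing a unit of `M` (a unital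
factorisation).  Then every prefix of every occurring signed factor represents a right
unit of `M`, and the factorisation is conservative in the maximal group image `G`: the
submonoid of `G` generated by the prefixes of the occurring factors equals the prefix
monoid of `G`. -/
theorem stmt13 {X I M : Type*} [InverseMonoid M] {k : ℕ}
    (rel : I → List (X × Bool)) (f : X → M)
    (hpres : IsSpecialPresentation rel f)
    (u : Fin k → List (X × Bool)) (seqs : I → List (Fin k × Bool))
    (hfac : ∀ i, rel i = ((seqs i).map (sfac u)).flatten)
    (hunital : ∀ j : Fin k,
      wordProd f (u j) * (wordProd f (u j))⁻¹ = 1 ∧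
      (wordProd f (u j))⁻¹ * wordProd f (u j) = 1) :
    (∀ (i : I), ∀ q ∈ seqs i, ∀ p : List (X × Bool),
        p <+: sfac u q → wordProd f p * (wordProd f p)⁻¹ = 1) ∧
    Submonoid.closure
        {g : PresentedGroup (presRels rel) | ∃ (i : I), ∃ q ∈ seqs i,
          ∃ p : List (X × Bool), p <+: sfac u q ∧ g = toPres (presRels rel) (FreeGroup.mk p)} =
      prefixMonoid rel := by
  classical
  -- Part 1: prefixes of occurring signed factors are right units of `M`.
  have part1 : ∀ (i : I), ∀ q ∈ seqs i, ∀ p : List (X × Bool),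
      p <+: sfac u q → wordProd f p * (wordProd f p)⁻¹ = 1 := by
    intro i q hq p hp
    obtain ⟨L₁, L₂, hL⟩ := List.append_of_mem hq
    have hrel := hpres.relator_one i
    rw [hfac i, hL, List.map_append, List.map_cons, List.flatten_append, List.flatten_cons,
      wordProd_append, wordProd_append] at hrel
    obtain ⟨s, hs⟩ := hp
    rw [← hs, wordProd_append] at hrel
    obtain ⟨y, hy1, hy2⟩ := unit_flatten f u hunital L₁
    set A := wordProd f ((L₁.map (sfac u)).flatten) with hA
    set Z := wordProd f p * wordProd f s * wordProd f ((L₂.map (sfac u)).flatten) with hZ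
    -- hrel : A * Z = 1
    have hZy : Z = y := by
      calc Z = 1 * Z := (one_mul _).symm
        _ = y * A * Z := by rw [hy2]
        _ = y * (A * Z) := mul_assoc _ _ _
        _ = y * 1 := by rw [hrel]
        _ = y := mul_one _
    have hZA : Z * A = 1 := by rw [hZy, hy2]
    have hfinal : wordProd f p *
        (wordProd f s * wordProd f ((L₂.map (sfac u)).flatten) * A) = 1 := by
      calc wordProd f p * (wordProd f s * wordProd f ((L₂.map (sfac u)).flatten) * A)
          = Z * A := by rw [hZ]; simp [mul_assoc]
        _ = 1 := hZA
    exact im_right_unit hfinal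
  refine ⟨part1, ?_⟩
  -- Part 2: conservativity in the maximal group image.
  refine le_antisymm ?_ ?_
  · -- closure of factor prefixes ≤ prefix monoid, via the Type-0 model
    apply Submonoid.closure_le.mpr
    rintro g ⟨i, q, hq, p, hp, rfl⟩
    have hcode : ∀ l ∈ p, ∃ cb : Cde u × Bool, decL u cb = (l.1, true) :=
      fun l hl => code_of_mem_sfac u q (hp.subset hl)
    have hru := part1 i q hq p hp
    obtain ⟨φ, hφ⟩ := hpres.universal (PEquiv (SS rel u) (SS rel u)) inferInstance (gtl rel u)
      (gt_rel_one rel u seqs hfac)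
    have hπ : φ (wordProd f p) = wordProd (gtl rel u) p :=
      im_hom_wordProd φ f (gtl rel u) hφ p
    have h1 : wordProd (gtl rel u) p * (wordProd (gtl rel u) p)⁻¹ = 1 := by
      rw [← hπ, ← im_map_inv, ← map_mul, hru, map_one]
    set π := wordProd (gtl rel u) p with hπdef
    have h2 : π.trans π.symm = PEquiv.refl (SS rel u) := by
      rw [← pe_mul_def, ← pe_inv_def]
      exact h1
    have h0 : evalw rel u ([] : List (Cde u × Bool)) ∈ prefixMonoid rel := by
      rw [evalw_nil]; exact one_mem _
    set a₀ : SS rel u := Quot.mk _ ⟨[], h0⟩ with ha₀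
    have h3 : (π.trans π.symm) a₀ = some a₀ := by rw [h2]; rfl
    rw [pe_trans_apply] at h3
    cases h4 : π a₀ with
    | none => rw [h4] at h3; simp at h3
    | some b =>
      have hb : b ∈ π a₀ := by rw [h4]; rfl
      have hval := eval_readout rel u p hcode a₀ b hb
      have hv0 : valS rel u a₀ = 1 := evalw_nil rel u
      rw [hv0, one_mul] at hval
      show toPres (presRels rel) (FreeGroup.mk p) ∈ prefixMonoid rel
      rw [← hval]
      exact valS_mem rel u b
  · -- prefix monoid ≤ closure of factor prefixes
    unfold prefixMonoid
    apply Submonoid.closure_le.mpr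
    rintro g ⟨i, p, hp, rfl⟩
    rw [hfac i] at hp
    have H : ∀ (L : List (Fin k × Bool)), (∀ q ∈ L, q ∈ seqs i) →
        ∀ p : List (X × Bool), p <+: (L.map (sfac u)).flatten →
        toPres (presRels rel) (FreeGroup.mk p) ∈
          Submonoid.closure {g : PresentedGroup (presRels rel) | ∃ (i : I), ∃ q ∈ seqs i,
            ∃ p : List (X × Bool), p <+: sfac u q ∧
              g = toPres (presRels rel) (FreeGroup.mk p)} := by
      intro L
      induction L with
      | nil =>
        intro _ p hp
        rw [List.map_nil, List.flatten_nil] at hp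
        obtain rfl := List.prefix_nil.mp hp
        rw [← FreeGroup.one_eq_mk, map_one]
        exact one_mem _
      | cons q L ih =>
        intro hmem p hp
        rw [List.map_cons, List.flatten_cons] at hp
        rcases prefix_append_cases hp with h | ⟨p', rfl, hp'⟩
        · exact Submonoid.subset_closure
            ⟨i, q, hmem q (List.mem_cons_self), p, h, rfl⟩
        · rw [← FreeGroup.mul_mk, map_mul]
          exact mul_mem
            (Submonoid.subset_closure
              ⟨i, q, hmem q (List.mem_cons_self), sfac u q, List.prefix_refl _, rfl⟩)
            (ih (fun q' h' => hmem q' (List.mem_cons_of_mem _ h')) p' hp')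
    exact H (seqs i) (fun _ h => h) p hp
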